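/- Let S be a feasible scenario of the multi-band uncertainty set and suppose for some row i the band partition cardinalities |J_{ik}(S)| do not all equal θ_k. Then there exists a feasible scenario S' with d^{S'}_{ij} ≥ d^S_{ij} for all i,j, such that for the modified row the band partition cardinalities are closer to the profile; iterating, there exists a feasible scenario S'' dominating S with |J_{ik}(S'')| = θ_k for all i ∈ I, k ∈ K. -/

import Mathlib

open scoped Classical

/-- `v` falls in band `k`: band `K⁻` is the single point `d K⁻`,
band `k > K⁻` is the interval `(d (k-1), d k]`. -/
def inBand (d : ℤ → ℝ) (Km k : ℤ) (v : ℝ) : Prop :=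
  if k = Km then v = d Km else d (k-1) < v ∧ v ≤ d k


noncomputable def bandOf (f : ℤ → ℝ) (Km Kp : ℤ) (v : ℝ) : ℤ :=
  if h : ((Finset.Icc Km Kp).filter (fun k => v ≤ f k)).Nonempty then
    ((Finset.Icc Km Kp).filter (fun k => v ≤ f k)).min' h
  else Km

lemma bandOf_spec (f : ℤ → ℝ) (Km Kp : ℤ) (v : ℝ) (hK : Km ≤ Kp) (hv : v ≤ f Kp) :
    bandOf f Km Kp v ∈ Finset.Icc Km Kp ∧ v ≤ f (bandOf f Km Kp v) ∧
      ∀ k ∈ Finset.Icc Km Kp, v ≤ f k → bandOf f Km Kp v ≤ k := by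
  have hne : ((Finset.Icc Km Kp).filter (fun k => v ≤ f k)).Nonempty :=
    ⟨Kp, by simp [Finset.mem_filter, Finset.mem_Icc, hK, hv]⟩
  rw [bandOf, dif_pos hne]
  have h1 := Finset.min'_mem _ hne
  simp only [Finset.mem_filter] at h1
  exact ⟨h1.1, h1.2, fun k hk hvk => Finset.min'_le _ _ (by simp [Finset.mem_filter, hk, hvk])⟩

lemma inBand_bandOf (f : ℤ → ℝ) (Km Kp : ℤ) (v : ℝ) (hK : Km ≤ Kp)
    (hv1 : f Km ≤ v) (hv2 : v ≤ f Kp) : inBand f Km (bandOf f Km Kp v) v := by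
  obtain ⟨hmem, hle, hmin⟩ := bandOf_spec f Km Kp v hK hv2
  rw [Finset.mem_Icc] at hmem
  rw [inBand]
  split_ifs with h
  · rw [h] at hle; exact le_antisymm hle hv1
  · refine ⟨?_, hle⟩
    by_contra hc
    push_neg at hc
    have := hmin (bandOf f Km Kp v - 1) (by rw [Finset.mem_Icc]; omega) hc
    omega

lemma inBand_eq_bandOf (f : ℤ → ℝ) (Km Kp : ℤ) (hmono : StrictMonoOn f (Set.Icc (Km:ℤ) Kp))
    (v : ℝ) (hK : Km ≤ Kp) (hv2 : v ≤ f Kp) {k : ℤ} (hk : k ∈ Finset.Icc Km Kp)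
    (hband : inBand f Km k v) : k = bandOf f Km Kp v := by
  obtain ⟨hmem, hle, hmin⟩ := bandOf_spec f Km Kp v hK hv2
  rw [Finset.mem_Icc] at hmem hk
  rw [inBand] at hband
  split_ifs at hband with h
  · have := hmin Km (Finset.mem_Icc.2 ⟨le_rfl, hK⟩) hband.le
    omega
  · obtain ⟨h1, h2⟩ := hband
    have hble := hmin k (by rw [Finset.mem_Icc]; omega) h2
    rcases lt_or_eq_of_le hble with hlt | heq
    · exfalso
      have hm : f (bandOf f Km Kp v) ≤ f (k-1) :=
        hmono.monotoneOn (Set.mem_Icc.2 ⟨hmem.1, hmem.2⟩) (Set.mem_Icc.2 ⟨by omega, by omega⟩) (by omega)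
      linarith
    · omega

lemma inBand_self (f : ℤ → ℝ) (Km Kp : ℤ) (hmono : StrictMonoOn f (Set.Icc (Km:ℤ) Kp))
    {b : ℤ} (hb : b ∈ Finset.Icc Km Kp) : inBand f Km b (f b) := by
  rw [Finset.mem_Icc] at hb
  rw [inBand]; split_ifs with h
  · rw [h]
  · exact ⟨hmono (Set.mem_Icc.2 ⟨by omega, by omega⟩) (Set.mem_Icc.2 hb) (by omega), le_refl _⟩

set_option maxHeartbeats 1600000 in
theorem stmt2 (m n : ℕ) (Km Kp : ℤ) (hKm : Km ≤ 0) (hKp : 0 ≤ Kp)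
    (d : Fin m → Fin n → ℤ → ℝ)
    (hmono : ∀ i j, StrictMonoOn (d i j) (Set.Icc (Km:ℤ) Kp))
    (hzero : ∀ i j, d i j 0 = 0)
    (l u : ℤ → ℤ)
    (hbounds : ∀ k ∈ Finset.Icc Km Kp, 0 ≤ l k ∧ l k ≤ u k ∧ u k ≤ (n:ℤ))
    (hu0 : u 0 = n)
    (hsuml : ∑ k ∈ Finset.Icc Km Kp, l k ≤ (n:ℤ))
    (p : ℤ) (hp : p ∈ Finset.Icc Km Kp)
    (hpfeas : (∑ i ∈ Finset.Icc Km p, l i) + (∑ i ∈ Finset.Icc (p+1) Kp, u i) ≤ (n:ℤ))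
    (hpmin : ∀ k ∈ Finset.Icc Km Kp,
      (∑ i ∈ Finset.Icc Km k, l i) + (∑ i ∈ Finset.Icc (k+1) Kp, u i) ≤ (n:ℤ) → p ≤ k)
    (θ : ℤ → ℤ)
    (hθlt : ∀ k, k < p → θ k = l k)
    (hθgt : ∀ k, p < k → θ k = u k)
    (hθp : θ p = n - ∑ k ∈ (Finset.Icc Km Kp).erase p, θ k)
    (S : Fin m → Fin n → ℝ)
    (hrange : ∀ i j, d i j Km ≤ S i j ∧ S i j ≤ d i j Kp)
    (hfeas : ∀ i : Fin m, ∀ k ∈ Finset.Icc Km Kp,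
      l k ≤ ((Finset.univ.filter (fun j => inBand (d i j) Km k (S i j))).card : ℤ) ∧
      ((Finset.univ.filter (fun j => inBand (d i j) Km k (S i j))).card : ℤ) ≤ u k) :
    ∃ S'' : Fin m → Fin n → ℝ,
      (∀ i j, S i j ≤ S'' i j) ∧
      (∀ i j, d i j Km ≤ S'' i j ∧ S'' i j ≤ d i j Kp) ∧
      (∀ i : Fin m, ∀ k ∈ Finset.Icc Km Kp,
        ((Finset.univ.filter (fun j => inBand (d i j) Km k (S'' i j))).card : ℤ) = θ k) := by
  classical
  have hK : Km ≤ Kp := le_trans hKm hKp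
  have hpI := Finset.mem_Icc.1 hp
  -- bands of current scenario
  set b : Fin m → Fin n → ℤ := fun i j => bandOf (d i j) Km Kp (S i j) with hbdef
  have hb_mem : ∀ i j, b i j ∈ Finset.Icc Km Kp := fun i j =>
    (bandOf_spec _ _ _ _ hK (hrange i j).2).1
  have hb_le : ∀ i j, S i j ≤ d i j (b i j) := fun i j =>
    (bandOf_spec _ _ _ _ hK (hrange i j).2).2.1
  have hb_band : ∀ i j, inBand (d i j) Km (b i j) (S i j) := fun i j =>
    inBand_bandOf _ _ _ _ hK (hrange i j).1 (hrange i j).2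
  have hcount_eq : ∀ i : Fin m, ∀ k ∈ Finset.Icc Km Kp,
      Finset.univ.filter (fun j => inBand (d i j) Km k (S i j)) =
      Finset.univ.filter (fun j => b i j = k) := by
    intro i k hk
    ext j
    simp only [Finset.mem_filter, Finset.mem_univ, true_and]
    constructor
    · intro h
      exact (inBand_eq_bandOf (d i j) Km Kp (hmono i j) (S i j) hK (hrange i j).2 hk h).symm
    · intro h; exact h ▸ hb_band i j
  have hfeas' : ∀ i : Fin m, ∀ k ∈ Finset.Icc Km Kp,
      l k ≤ ((Finset.univ.filter (fun j => b i j = k)).card : ℤ) ∧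
      ((Finset.univ.filter (fun j => b i j = k)).card : ℤ) ≤ u k := by
    intro i k hk; rw [← hcount_eq i k hk]; exact hfeas i k hk
  -- θ facts
  have hθsum : ∑ k ∈ Finset.Icc Km Kp, θ k = n := by
    have h := Finset.add_sum_erase _ θ hp
    omega
  have hsplit : ∀ (f : ℤ → ℤ) (k : ℤ), Km - 1 ≤ k → k ≤ Kp →
      ∑ x ∈ Finset.Icc Km Kp, f x =
        (∑ x ∈ Finset.Icc Km k, f x) + ∑ x ∈ Finset.Icc (k+1) Kp, f x := by
    intro f k h1 h2
    have hset : Finset.Icc Km Kp = Finset.Icc Km k ∪ Finset.Icc (k+1) Kp := by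
      ext x; simp only [Finset.mem_union, Finset.mem_Icc]; omega
    rw [hset, Finset.sum_union (by
      rw [Finset.disjoint_left]; intro a ha hb
      rw [Finset.mem_Icc] at ha hb; omega)]
  have hθp_ge : l p ≤ θ p := by
    have herase : ∑ k ∈ (Finset.Icc Km Kp).erase p, θ k =
        (∑ x ∈ Finset.Icc Km (p-1), l x) + ∑ x ∈ Finset.Icc (p+1) Kp, u x := by
      have h1 : (Finset.Icc Km Kp).erase p = Finset.Icc Km (p-1) ∪ Finset.Icc (p+1) Kp := by
        ext x; simp only [Finset.mem_erase, Finset.mem_Icc, Finset.mem_union]; omega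
      rw [h1, Finset.sum_union (by
        rw [Finset.disjoint_left]; intro a ha hb
        rw [Finset.mem_Icc] at ha hb; omega)]
      congr 1
      · exact Finset.sum_congr rfl (fun x hx => hθlt x (by rw [Finset.mem_Icc] at hx; omega))
      · exact Finset.sum_congr rfl (fun x hx => hθgt x (by rw [Finset.mem_Icc] at hx; omega))
    have hIp : ∑ x ∈ Finset.Icc Km p, l x = (∑ x ∈ Finset.Icc Km (p-1), l x) + l p := by
      have h1 : Finset.Icc Km p = insert p (Finset.Icc Km (p-1)) := by
        ext x; simp only [Finset.mem_Icc, Finset.mem_insert]; omega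
      rw [h1, Finset.sum_insert (by simp only [Finset.mem_Icc]; omega)]
      ring
    omega
  have hθnn : ∀ k ∈ Finset.Icc Km Kp, 0 ≤ θ k := by
    intro k hk
    have hkI := Finset.mem_Icc.1 hk
    rcases lt_trichotomy k p with h | h | h
    · rw [hθlt k h]; exact (hbounds k hk).1
    · subst h
      have := (hbounds k hk).1
      omega
    · rw [hθgt k h]
      have h1 := (hbounds k hk).1
      have h2 := (hbounds k hk).2.1
      omega
  -- cumulative profile
  set T : ℤ → ℤ := fun k => ∑ x ∈ Finset.Icc Km k, θ x with hTdef
  have hTmono : ∀ k k', k ≤ k' → k' ≤ Kp → T k ≤ T k' := by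
    intro k k' h1 h2
    apply Finset.sum_le_sum_of_subset_of_nonneg (Finset.Icc_subset_Icc_right h1)
    intro x hx _
    rw [Finset.mem_Icc] at hx
    exact hθnn x (Finset.mem_Icc.2 ⟨hx.1, by omega⟩)
  have hT0 : T (Km - 1) = 0 := by
    simp [hTdef, Finset.Icc_eq_empty (show ¬ (Km ≤ Km - 1) by omega)]
  have hTKp : T Kp = n := hθsum
  have hTnn : ∀ k, k ≤ Kp → 0 ≤ T k := by
    intro k hk
    apply Finset.sum_nonneg
    intro x hx
    rw [Finset.mem_Icc] at hx
    exact hθnn x (Finset.mem_Icc.2 ⟨hx.1, by omega⟩)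
  have hTle : ∀ k, k ≤ Kp → T k ≤ n := fun k hk => hTKp ▸ hTmono k Kp hk le_rfl
  have hTstep : ∀ k, Km ≤ k → T k = T (k-1) + θ k := by
    intro k hk
    have h1 : Finset.Icc Km k = insert k (Finset.Icc Km (k-1)) := by
      ext x; simp only [Finset.mem_Icc, Finset.mem_insert]; omega
    show ∑ x ∈ Finset.Icc Km k, θ x = (∑ x ∈ Finset.Icc Km (k-1), θ x) + θ k
    rw [h1, Finset.sum_insert (by simp only [Finset.mem_Icc]; omega)]
    ring
  -- cumulative counts dominate cumulative profile
  have hCsum : ∀ (i : Fin m) (k : ℤ), Km ≤ k → k ≤ Kp →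
      ((Finset.univ.filter (fun j => b i j ≤ k)).card : ℤ) =
      ∑ k' ∈ Finset.Icc Km k, ((Finset.univ.filter (fun j => b i j = k')).card : ℤ) := by
    intro i k h1 h2
    have hnat : (Finset.univ.filter (fun j => b i j ≤ k)).card =
        ∑ k' ∈ Finset.Icc Km k, (Finset.univ.filter (fun j => b i j = k')).card := by
      rw [Finset.card_eq_sum_card_fiberwise (f := b i) (t := Finset.Icc Km k) (by
        intro j hj
        simp only [Finset.mem_coe, Finset.mem_filter, Finset.mem_univ, true_and] at hj
        have := Finset.mem_Icc.1 (hb_mem i j)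
        exact Finset.mem_Icc.2 ⟨this.1, hj⟩)]
      apply Finset.sum_congr rfl
      intro k' hk'
      rw [Finset.mem_Icc] at hk'
      have hff : (Finset.univ.filter (fun j => b i j ≤ k)).filter (fun j => b i j = k') =
          Finset.univ.filter (fun j => b i j = k') := by
        rw [Finset.filter_filter]
        ext j
        simp only [Finset.mem_filter, Finset.mem_univ, true_and]
        omega
      rw [hff]
    exact_mod_cast hnat
  have hCtot : ∀ i : Fin m,
      ∑ k' ∈ Finset.Icc Km Kp, ((Finset.univ.filter (fun j => b i j = k')).card : ℤ) = n := by
    intro i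
    have hnat : ∑ k' ∈ Finset.Icc Km Kp, (Finset.univ.filter (fun j => b i j = k')).card = n := by
      rw [← Finset.card_eq_sum_card_fiberwise (fun j _ => hb_mem i j)]
      simp
    exact_mod_cast hnat
  have hTC : ∀ (i : Fin m) (k : ℤ), k ≤ Kp →
      T k ≤ ((Finset.univ.filter (fun j => b i j ≤ k)).card : ℤ) := by
    intro i k hk
    rcases lt_or_ge k Km with h | h
    · have hT : T k = 0 := by
        simp [hTdef, Finset.Icc_eq_empty (show ¬ (Km ≤ k) by omega)]
      rw [hT]
      positivity
    · rw [hCsum i k h hk]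
      rcases lt_or_ge k p with hkp | hkp
      · apply Finset.sum_le_sum
        intro x hx
        rw [Finset.mem_Icc] at hx
        rw [hθlt x (by omega)]
        exact (hfeas' i x (Finset.mem_Icc.2 ⟨hx.1, by omega⟩)).1
      · have h1 := hsplit θ k (by omega) hk
        have h2 : ∑ x ∈ Finset.Icc Km Kp, ((Finset.univ.filter (fun j => b i j = x)).card : ℤ) =
            (∑ x ∈ Finset.Icc Km k, ((Finset.univ.filter (fun j => b i j = x)).card : ℤ)) +
            ∑ x ∈ Finset.Icc (k+1) Kp, ((Finset.univ.filter (fun j => b i j = x)).card : ℤ) :=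
          hsplit (fun k' => ((Finset.univ.filter (fun j => b i j = k')).card : ℤ)) k (by omega) hk
        have h3 : ∑ x ∈ Finset.Icc (k+1) Kp, θ x = ∑ x ∈ Finset.Icc (k+1) Kp, u x :=
          Finset.sum_congr rfl (fun x hx => hθgt x (by rw [Finset.mem_Icc] at hx; omega))
        have h4 : ∑ x ∈ Finset.Icc (k+1) Kp, ((Finset.univ.filter (fun j => b i j = x)).card : ℤ)
            ≤ ∑ x ∈ Finset.Icc (k+1) Kp, u x := by
          apply Finset.sum_le_sum
          intro x hx
          rw [Finset.mem_Icc] at hx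
          exact (hfeas' i x (Finset.mem_Icc.2 ⟨by omega, hx.2⟩)).2
        have h5 := hCtot i
        have h6 := hθsum
        have hTk : T k = ∑ x ∈ Finset.Icc Km k, θ x := rfl
        omega
  -- lexicographic rank
  set r : Fin m → Fin n → ℕ := fun i j =>
    (Finset.univ.filter (fun j' => b i j' < b i j ∨ (b i j' = b i j ∧ j' < j))).card with hrdef
  have hr_lt : ∀ i j, r i j < n := by
    intro i j
    have hsub : (Finset.univ.filter
        (fun j' => b i j' < b i j ∨ (b i j' = b i j ∧ j' < j))) ⊆ Finset.univ.erase j := by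
      intro x hx
      simp only [Finset.mem_filter, Finset.mem_univ, true_and] at hx
      refine Finset.mem_erase.2 ⟨?_, Finset.mem_univ x⟩
      rintro rfl
      rcases hx with h | ⟨_, h⟩
      · exact lt_irrefl _ h
      · exact lt_irrefl _ h
    calc r i j ≤ (Finset.univ.erase j).card := Finset.card_le_card hsub
      _ < n := by
        rw [Finset.card_erase_of_mem (Finset.mem_univ j), Finset.card_univ, Fintype.card_fin]
        have hn0 : 0 < n := j.pos
        omega
  have hr_lex : ∀ (i : Fin m) (j j' : Fin n),
      (b i j < b i j' ∨ (b i j = b i j' ∧ j < j')) → r i j < r i j' := by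
    intro i j j' hlex
    apply Finset.card_lt_card
    rw [Finset.ssubset_iff_of_subset (by
      intro x hx
      simp only [Finset.mem_filter, Finset.mem_univ, true_and] at hx ⊢
      rcases hlex with h1 | ⟨h1, h2⟩
      · rcases hx with h3 | ⟨h3, _⟩
        · exact Or.inl (lt_trans h3 h1)
        · exact Or.inl (h3 ▸ h1)
      · rcases hx with h3 | ⟨h3, h4⟩
        · exact Or.inl (h1 ▸ h3)
        · exact Or.inr ⟨h1 ▸ h3, lt_trans h4 h2⟩)]
    refine ⟨j, ?_, ?_⟩
    · simp only [Finset.mem_filter, Finset.mem_univ, true_and]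
      exact hlex
    · simp
  have hr_inj : ∀ i : Fin m, Function.Injective (fun j => r i j) := by
    intro i j j' h
    by_contra hne
    have htri : (b i j < b i j' ∨ (b i j = b i j' ∧ j < j')) ∨
        (b i j' < b i j ∨ (b i j' = b i j ∧ j' < j)) := by
      rcases lt_trichotomy (b i j) (b i j') with h1 | h1 | h1
      · exact Or.inl (Or.inl h1)
      · rcases lt_trichotomy j j' with h2 | h2 | h2
        · exact Or.inl (Or.inr ⟨h1, h2⟩)
        · exact absurd h2 hne
        · exact Or.inr (Or.inr ⟨h1.symm, h2⟩)
      · exact Or.inr (Or.inl h1)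
    rcases htri with h1 | h1
    · exact absurd h (ne_of_lt (hr_lex i j j' h1))
    · exact absurd h.symm (ne_of_lt (hr_lex i j' j h1))
  -- counting ranks in an interval
  have hcard_r : ∀ (i : Fin m) (a c : ℤ), 0 ≤ a → a ≤ c → c ≤ n →
      ((Finset.univ.filter (fun j => a ≤ (r i j : ℤ) ∧ (r i j : ℤ) < c)).card : ℤ) = c - a := by
    intro i a c ha hac hcn
    have hbij : Function.Bijective (fun j : Fin n => (⟨r i j, hr_lt i j⟩ : Fin n)) := by
      rw [← Finite.injective_iff_bijective]
      intro x y hxy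
      apply hr_inj i
      simpa using congrArg Fin.val hxy
    have h1 : (Finset.univ.filter (fun j => a ≤ (r i j : ℤ) ∧ (r i j : ℤ) < c)).card
        = (Finset.univ.filter (fun t : Fin n => a ≤ ((t : ℕ) : ℤ) ∧ ((t : ℕ) : ℤ) < c)).card := by
      apply Finset.card_bij (fun j _ => (⟨r i j, hr_lt i j⟩ : Fin n))
      · intro j hj
        simp only [Finset.mem_filter, Finset.mem_univ, true_and] at hj ⊢
        exact hj
      · intro x hx y hy hxy
        exact hbij.1 hxy
      · intro t ht
        obtain ⟨j, hj⟩ := hbij.2 t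
        refine ⟨j, ?_, hj⟩
        simp only [Finset.mem_filter, Finset.mem_univ, true_and] at ht ⊢
        have : r i j = (t : ℕ) := by simpa using congrArg Fin.val hj
        rw [this]
        exact ht
    have h2 : (Finset.univ.filter (fun t : Fin n => a ≤ ((t : ℕ) : ℤ) ∧ ((t : ℕ) : ℤ) < c)).card
        = (Finset.Ico a c).card := by
      refine Finset.card_bij (fun t _ => ((t : ℕ) : ℤ)) ?_ ?_ ?_
      · intro t ht
        simp only [Finset.mem_filter, Finset.mem_univ, true_and] at ht
        exact Finset.mem_Ico.2 ht
      · intro x hx y hy hxy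
        have hxy' : ((x : ℕ) : ℤ) = ((y : ℕ) : ℤ) := hxy
        exact Fin.ext (by exact_mod_cast hxy')
      · intro x hx
        rw [Finset.mem_Ico] at hx
        have hx0 : 0 ≤ x := le_trans ha hx.1
        have hxn : x < (n : ℤ) := lt_of_lt_of_le hx.2 hcn
        refine ⟨⟨x.toNat, by omega⟩, ?_, by simp; omega⟩
        simp only [Finset.mem_filter, Finset.mem_univ, true_and]
        constructor <;> simp <;> omega
    rw [h1, h2, Int.card_Ico]
    omega
  -- new bands
  have hTr : ∀ (i : Fin m) (j : Fin n), ((r i j : ℤ)) < T Kp := by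
    intro i j; rw [hTKp]; exact_mod_cast hr_lt i j
  have hnbex : ∀ (i : Fin m) (j : Fin n), ∃ nbij : ℤ, nbij ∈ Finset.Icc Km Kp ∧
      (r i j : ℤ) < T nbij ∧ ∀ k ∈ Finset.Icc Km Kp, (r i j : ℤ) < T k → nbij ≤ k := by
    intro i j
    have hne : ((Finset.Icc Km Kp).filter (fun k => (r i j : ℤ) < T k)).Nonempty :=
      ⟨Kp, Finset.mem_filter.2 ⟨Finset.mem_Icc.2 ⟨hK, le_rfl⟩, hTr i j⟩⟩
    refine ⟨_, (Finset.mem_filter.1 (Finset.min'_mem _ hne)).1,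
      (Finset.mem_filter.1 (Finset.min'_mem _ hne)).2, ?_⟩
    intro k hk hlt
    apply Finset.min'_le
    rw [Finset.mem_filter]
    exact ⟨hk, hlt⟩
  choose nb hnb_mem hnb_lt hnb_min using hnbex
  have hbC : ∀ i j, ((Finset.univ.filter (fun j' => b i j' ≤ b i j - 1)).card : ℤ) ≤ r i j := by
    intro i j
    have hsub : Finset.univ.filter (fun j' => b i j' ≤ b i j - 1) ⊆
        Finset.univ.filter (fun j' => b i j' < b i j ∨ (b i j' = b i j ∧ j' < j)) := by
      intro x hx
      simp only [Finset.mem_filter, Finset.mem_univ, true_and] at hx ⊢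
      exact Or.inl (by omega)
    exact_mod_cast Finset.card_le_card hsub
  have hnb_ge : ∀ i j, b i j ≤ nb i j := by
    intro i j
    by_contra hc
    push_neg at hc
    have hbI := Finset.mem_Icc.1 (hb_mem i j)
    have h1 : T (nb i j) ≤ T (b i j - 1) := hTmono _ _ (by omega) (by omega)
    have h2 := hTC i (b i j - 1) (by omega)
    have h3 := hbC i j
    have h4 := hnb_lt i j
    omega
  -- fibers of nb
  have hnb_fiber : ∀ i : Fin m, ∀ k ∈ Finset.Icc Km Kp,
      Finset.univ.filter (fun j => nb i j = k) =
      Finset.univ.filter (fun j => T (k-1) ≤ (r i j : ℤ) ∧ (r i j : ℤ) < T k) := by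
    intro i k hk
    have hkI := Finset.mem_Icc.1 hk
    ext j
    simp only [Finset.mem_filter, Finset.mem_univ, true_and]
    constructor
    · intro h
      refine ⟨?_, h ▸ hnb_lt i j⟩
      rcases eq_or_lt_of_le hkI.1 with hKm' | hKm'
      · rw [← hKm', hT0]
        positivity
      · by_contra hc
        push_neg at hc
        have := hnb_min i j (k-1) (Finset.mem_Icc.2 ⟨by omega, by omega⟩) hc
        omega
    · rintro ⟨h1, h2⟩
      have hle := hnb_min i j k hk h2
      have hgt : ¬ nb i j < k := by
        intro hlt
        have hm : T (nb i j) ≤ T (k-1) := hTmono _ _ (by omega) (by omega)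
        have := hnb_lt i j
        omega
      omega
  have hnb_card : ∀ i : Fin m, ∀ k ∈ Finset.Icc Km Kp,
      ((Finset.univ.filter (fun j => nb i j = k)).card : ℤ) = θ k := by
    intro i k hk
    have hkI := Finset.mem_Icc.1 hk
    rw [hnb_fiber i k hk,
      hcard_r i (T (k-1)) (T k) (hTnn (k-1) (by omega)) (hTmono (k-1) k (by omega) hkI.2)
        (hTle k hkI.2)]
    have := hTstep k hkI.1
    omega
  -- assemble
  refine ⟨fun i j => d i j (nb i j), ?_, ?_, ?_⟩
  · intro i j
    have hbI := Finset.mem_Icc.1 (hb_mem i j)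
    have hnI := Finset.mem_Icc.1 (hnb_mem i j)
    calc S i j ≤ d i j (b i j) := hb_le i j
      _ ≤ d i j (nb i j) := (hmono i j).monotoneOn (Set.mem_Icc.2 ⟨hbI.1, hbI.2⟩)
          (Set.mem_Icc.2 ⟨hnI.1, hnI.2⟩) (hnb_ge i j)
  · intro i j
    have hnI := Finset.mem_Icc.1 (hnb_mem i j)
    exact ⟨(hmono i j).monotoneOn (Set.mem_Icc.2 ⟨le_rfl, hK⟩)
        (Set.mem_Icc.2 ⟨hnI.1, hnI.2⟩) hnI.1,
      (hmono i j).monotoneOn (Set.mem_Icc.2 ⟨hnI.1, hnI.2⟩)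
        (Set.mem_Icc.2 ⟨hK, le_rfl⟩) hnI.2⟩
  · intro i k hk
    have hfe : Finset.univ.filter (fun j => inBand (d i j) Km k (d i j (nb i j))) =
        Finset.univ.filter (fun j => nb i j = k) := by
      ext j
      have hnI := Finset.mem_Icc.1 (hnb_mem i j)
      simp only [Finset.mem_filter, Finset.mem_univ, true_and]
      constructor
      · intro h
        have hv2 : d i j (nb i j) ≤ d i j Kp :=
          (hmono i j).monotoneOn (Set.mem_Icc.2 ⟨hnI.1, hnI.2⟩)
            (Set.mem_Icc.2 ⟨hK, le_rfl⟩) hnI.2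
        have h1 := inBand_eq_bandOf (d i j) Km Kp (hmono i j) (d i j (nb i j)) hK hv2 hk h
        have h2 := inBand_eq_bandOf (d i j) Km Kp (hmono i j) (d i j (nb i j)) hK hv2
          (hnb_mem i j) (inBand_self (d i j) Km Kp (hmono i j) (hnb_mem i j))
        omega
      · intro h
        exact h ▸ inBand_self (d i j) Km Kp (hmono i j) (hnb_mem i j)
    rw [hfe]
    exact hnb_card i k hk
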